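/- Let (s_k)_{k≥1} be i.i.d. integrable real-valued random variables with s_k ≤ 1 almost surely and μ = E[s_1] > 0, and let h > 0. Then the one-sided CUSUM alarm time satisfies E[T_h] ≤ (h + 1)/μ. -/

import Mathlib

open MeasureTheory ProbabilityTheory
open scoped ENNReal

/-- One-sided CUSUM statistic with step sequence `x` (where `x k` is the `(k+1)`-st
step `s_{k+1}`): `g_0 = 0`, `g_{k+1} = max (0, g_k + s_{k+1})`. -/
def gCusum (x : ℕ → ℝ) : ℕ → ℝ
  | 0 => 0
  | k + 1 => max 0 (gCusum x k + x k)

/-- One-sided CUSUM alarm time `T_h = inf {k ≥ 1 : g_k ≥ h}`, valued in `ℝ≥0∞`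
(`⊤` if the threshold is never reached). -/
noncomputable def oneSidedAlarm (h : ℝ) (x : ℕ → ℝ) : ℝ≥0∞ :=
  sInf ((fun n : ℕ => (n : ℝ≥0∞)) '' {k : ℕ | 1 ≤ k ∧ h ≤ gCusum x k})

lemma sum_le_gCusum (x : ℕ → ℝ) : ∀ k, ∑ i ∈ Finset.range k, x i ≤ gCusum x k := by
  intro k
  induction k with
  | zero => simp [gCusum]
  | succ n ih =>
    rw [Finset.sum_range_succ, gCusum]
    exact le_max_of_le_right (by linarith)

open scoped Classical in
lemma alarm_le_tsum (h : ℝ) (x : ℕ → ℝ) :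
    oneSidedAlarm h x ≤ ∑' k : ℕ,
      (if ∀ j, 1 ≤ j → j ≤ k → ∑ i ∈ Finset.range j, x i < h then (1 : ℝ≥0∞) else 0) := by
  classical
  by_cases hex : ∃ j, 1 ≤ j ∧ h ≤ ∑ i ∈ Finset.range j, x i
  · set n := Nat.find hex with hn
    have hspec := Nat.find_spec hex
    have hle : oneSidedAlarm h x ≤ (n : ℝ≥0∞) := by
      apply sInf_le
      exact ⟨n, ⟨hspec.1, le_trans hspec.2 (sum_le_gCusum x n)⟩, rfl⟩
    refine hle.trans ?_
    have hone : ∀ k ∈ Finset.range n,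
        (if ∀ j, 1 ≤ j → j ≤ k → ∑ i ∈ Finset.range j, x i < h then (1 : ℝ≥0∞) else 0) = 1 := by
      intro k hk
      rw [if_pos]
      intro j hj1 hjk
      by_contra hge
      push_neg at hge
      have hjlt : j < n := lt_of_le_of_lt hjk (Finset.mem_range.1 hk)
      exact Nat.find_min hex hjlt ⟨hj1, hge⟩
    have hcalc : (n : ℝ≥0∞) = ∑ k ∈ Finset.range n,
        (if ∀ j, 1 ≤ j → j ≤ k → ∑ i ∈ Finset.range j, x i < h then (1 : ℝ≥0∞) else 0) := by
      rw [Finset.sum_congr rfl hone]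
      simp
    rw [hcalc]
    exact ENNReal.sum_le_tsum _
  · push_neg at hex
    have hall : ∀ k : ℕ, (if ∀ j, 1 ≤ j → j ≤ k → ∑ i ∈ Finset.range j, x i < h
        then (1 : ℝ≥0∞) else 0) = 1 := fun k => if_pos (fun j hj1 _ => hex j hj1)
    calc oneSidedAlarm h x ≤ ⊤ := le_top
    _ = ∑' _ : ℕ, (1 : ℝ≥0∞) := (ENNReal.tsum_const_eq_top_of_ne_zero one_ne_zero).symm
    _ = _ := by exact (tsum_congr hall).symm

open scoped Classical in
lemma sum_ind_le (h : ℝ) (hh : 0 < h) (x : ℕ → ℝ) (hx : ∀ k, x k ≤ 1) (N : ℕ) :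
    ∑ k ∈ Finset.range N,
      (if ∀ j, 1 ≤ j → j ≤ k → ∑ i ∈ Finset.range j, x i < h then x k else 0) ≤ h + 1 := by
  classical
  set P : ℕ → Prop := fun k => ∀ j, 1 ≤ j → j ≤ k → ∑ i ∈ Finset.range j, x i < h with hP
  have hPanti : ∀ {a b : ℕ}, a ≤ b → P b → P a :=
    fun hab hPb j h1 hja => hPb j h1 (hja.trans hab)
  have H : ∃ k, k = N ∨ ¬ P k := ⟨N, Or.inl rfl⟩
  set M := Nat.find H with hM
  have hMN : M ≤ N := Nat.find_le (Or.inl rfl)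
  have hPk : ∀ k < M, P k := by
    intro k hk
    have := Nat.find_min H hk
    push_neg at this
    exact this.2
  have key : ∀ k < N, (if P k then x k else 0) = if k < M then x k else 0 := by
    intro k hkN
    by_cases hk : k < M
    · rw [if_pos hk, if_pos (hPk k hk)]
    · push_neg at hk
      have hMne : M ≠ N := by omega
      have hPM : ¬ P M := (Nat.find_spec H).resolve_left hMne
      rw [if_neg (fun hPkk => hPM (hPanti hk hPkk)), if_neg (not_lt.2 hk)]
  have hsum : ∑ k ∈ Finset.range N,
      (if P k then x k else 0) = ∑ k ∈ Finset.range M, x k := by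
    rw [Finset.sum_congr rfl (fun k hk => key k (Finset.mem_range.1 hk))]
    rw [← Finset.sum_subset (Finset.range_subset_range.2 hMN)
      (fun k _ hk => if_neg (by simp only [Finset.mem_range] at hk; omega))]
    exact Finset.sum_congr rfl fun k hk => if_pos (Finset.mem_range.1 hk)
  have hconv : (∑ k ∈ Finset.range N,
      if ∀ j, 1 ≤ j → j ≤ k → ∑ i ∈ Finset.range j, x i < h then x k else 0)
      = ∑ k ∈ Finset.range N, (if P k then x k else 0) := by
    refine Finset.sum_congr rfl fun k _ => ?_
    congr 1
  refine le_trans (le_of_eq (hconv.trans hsum)) ?_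
  rcases Nat.eq_zero_or_pos M with hM0 | hMpos
  · rw [hM0]; simp; linarith
  · obtain ⟨M', hM'⟩ : ∃ M', M = M' + 1 := ⟨M - 1, by omega⟩
    rw [hM', Finset.sum_range_succ]
    have hS : ∑ i ∈ Finset.range M', x i ≤ h := by
      rcases Nat.eq_zero_or_pos M' with h0 | hpos
      · rw [h0]; simp; linarith
      · exact le_of_lt ((hPk M' (by omega)) M' hpos le_rfl)
    linarith [hx M']

/-- **One-sided detection-delay bound** (from the proof of Proposition 1).  If the
i.i.d. integrable steps satisfy `s_k ≤ 1` a.s. and have mean `m = E[s_1] > 0`, then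
the one-sided CUSUM alarm time satisfies `E[T_h] ≤ (h + 1) / m`. -/
theorem one_sided_cusum_delay_bound
    {Ω : Type*} [MeasurableSpace Ω] {μ : Measure Ω} [IsProbabilityMeasure μ]
    (s : ℕ → Ω → ℝ) (hmeas : ∀ k, Measurable (s k))
    (hindep : iIndepFun s μ)
    (hident : ∀ k, IdentDistrib (s k) (s 0) μ μ)
    (hint : Integrable (s 0) μ)
    (hbdd : ∀ k, ∀ᵐ ω ∂μ, s k ω ≤ 1)
    (m : ℝ) (hmean : ∫ ω, s 0 ω ∂μ = m) (hm : 0 < m)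
    (h : ℝ) (hh : 0 < h) :
    ∫⁻ ω, oneSidedAlarm h (fun k => s k ω) ∂μ ≤ ENNReal.ofReal ((h + 1) / m) := by
  classical
  set A : ℕ → Set Ω := fun k =>
    {ω | ∀ j, 1 ≤ j → j ≤ k → ∑ i ∈ Finset.range j, s i ω < h} with hA
  have hS_meas : ∀ j, Measurable fun ω => ∑ i ∈ Finset.range j, s i ω :=
    fun j => Finset.measurable_sum _ fun i _ => hmeas i
  have hA_meas : ∀ k, MeasurableSet (A k) := by
    intro k
    have : A k = ⋂ j, ⋂ (_ : 1 ≤ j), ⋂ (_ : j ≤ k),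
        {ω | ∑ i ∈ Finset.range j, s i ω < h} := by
      ext ω; simp [hA, Set.mem_iInter]
    rw [this]
    exact MeasurableSet.iInter fun j => MeasurableSet.iInter fun _ =>
      MeasurableSet.iInter fun _ => measurableSet_lt (hS_meas j) measurable_const
  -- integrability of each step
  have hint_k : ∀ k, Integrable (s k) μ := fun k => (hident k).integrable_iff.mpr hint
  have hmean_k : ∀ k, ∫ ω, s k ω ∂μ = m := fun k => (hident k).integral_eq.trans hmean
  -- independence of indicator of A k and s k
  have hkey : ∀ k, ∫ ω, (A k).indicator (fun _ => (1 : ℝ)) ω * s k ω ∂μ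
      = (μ (A k)).toReal * m := by
    intro k
    set T : Finset ℕ := Finset.range k with hT
    have hdisj : Disjoint T {k} := by
      simp [hT, Finset.disjoint_singleton_right]
    have hIF := hindep.indepFun_finset T {k} hdisj hmeas
    set Bset : Set ({i : ℕ // i ∈ T} → ℝ) :=
      {v | ∀ j, 1 ≤ j → j ≤ k →
        (∑ i ∈ Finset.range j, if hi : i ∈ T then v ⟨i, hi⟩ else 0) < h} with hB
    have hB_meas : MeasurableSet Bset := by
      have : Bset = ⋂ j, ⋂ (_ : 1 ≤ j), ⋂ (_ : j ≤ k),
          {v : {i : ℕ // i ∈ T} → ℝ |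
            (∑ i ∈ Finset.range j, if hi : i ∈ T then v ⟨i, hi⟩ else 0) < h} := by
        ext v; simp [hB, Set.mem_iInter]
      rw [this]
      refine MeasurableSet.iInter fun j => MeasurableSet.iInter fun _ =>
        MeasurableSet.iInter fun _ => measurableSet_lt ?_ measurable_const
      refine Finset.measurable_sum _ fun i _ => ?_
      by_cases hi : i ∈ T
      · simp only [dif_pos hi]; exact measurable_pi_apply _
      · simp only [dif_neg hi]; exact measurable_const
    set φ : ({i : ℕ // i ∈ T} → ℝ) → ℝ := fun v => if v ∈ Bset then 1 else 0 with hφdef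
    have hφ : Measurable φ := Measurable.ite hB_meas measurable_const measurable_const
    set ψ : ({i : ℕ // i ∈ ({k} : Finset ℕ)} → ℝ) → ℝ := fun v => v ⟨k, Finset.mem_singleton_self k⟩
      with hψdef
    have hψ : Measurable ψ := measurable_pi_apply _
    have hIF2 := hIF.comp hφ hψ
    have hsum_eq : ∀ ω : Ω, ∀ j, j ≤ k →
        (∑ i ∈ Finset.range j, if hi : i ∈ T then (fun i : {i : ℕ // i ∈ T} => s i ω) ⟨i, hi⟩ else 0)
        = ∑ i ∈ Finset.range j, s i ω := by
      intro ω j hj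
      refine Finset.sum_congr rfl fun i hi => ?_
      have hiT : i ∈ T := by
        rw [hT, Finset.mem_range]
        exact lt_of_lt_of_le (Finset.mem_range.1 hi) hj
      rw [dif_pos hiT]
    have hcomp : (φ ∘ fun ω (i : {i : ℕ // i ∈ T}) => s i ω)
        = (A k).indicator (fun _ => (1 : ℝ)) := by
      funext ω
      have hiff : ((fun i : {i : ℕ // i ∈ T} => s i ω) ∈ Bset) ↔ ω ∈ A k := by
        constructor
        · intro H j h1 hjk
          have := H j h1 hjk
          rwa [hsum_eq ω j hjk] at this
        · intro H j h1 hjk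
          rw [hsum_eq ω j hjk]
          exact H j h1 hjk
      simp only [Function.comp_apply, hφdef, Set.indicator_apply]
      exact if_congr hiff rfl rfl
    have hcomp2 : (ψ ∘ fun ω (i : {i : ℕ // i ∈ ({k} : Finset ℕ)}) => s i ω) = s k := rfl
    rw [hcomp, hcomp2] at hIF2
    have hint_ind : Integrable ((A k).indicator fun _ => (1 : ℝ)) μ :=
      (integrable_const (1 : ℝ)).indicator (hA_meas k)
    have := IndepFun.integral_mul_eq_mul_integral hIF2 hint_ind.aestronglyMeasurable (hint_k k).aestronglyMeasurable
    have hprod : (fun ω => (A k).indicator (fun _ => (1 : ℝ)) ω * s k ω)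
        = ((A k).indicator fun _ => (1 : ℝ)) * s k := rfl
    rw [hprod, this, hmean_k k]
    congr 1
    rw [integral_indicator_const (1 : ℝ) (hA_meas k)]
    simp [Measure.real]
  -- a.e. bound on steps, all k simultaneously
  have hbdd' : ∀ᵐ ω ∂μ, ∀ k, s k ω ≤ 1 := ae_all_iff.2 hbdd
  -- Wald-type partial sum bound
  have hwald : ∀ N : ℕ, ∑ k ∈ Finset.range N, μ (A k) ≤ ENNReal.ofReal ((h + 1) / m) := by
    intro N
    have hint_prod : ∀ k, Integrable (fun ω => (A k).indicator (fun _ => (1 : ℝ)) ω * s k ω) μ := by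
      intro k
      refine (hint_k k).bdd_mul (c := 1) ?_ (Filter.Eventually.of_forall fun ω => ?_)
      · exact ((measurable_const (a := (1:ℝ))).indicator (hA_meas k)).aestronglyMeasurable
      · by_cases hω : ω ∈ A k <;> simp [Set.indicator_apply, hω]
    have hreal : m * ∑ k ∈ Finset.range N, (μ (A k)).toReal ≤ h + 1 := by
      have h1 : m * ∑ k ∈ Finset.range N, (μ (A k)).toReal
          = ∫ ω, ∑ k ∈ Finset.range N, (A k).indicator (fun _ => (1 : ℝ)) ω * s k ω ∂μ := by
        rw [integral_finset_sum _ fun k _ => hint_prod k, Finset.mul_sum]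
        exact Finset.sum_congr rfl fun k _ => by rw [hkey k]; ring
      have h2 : ∀ᵐ ω ∂μ, ∑ k ∈ Finset.range N, (A k).indicator (fun _ => (1 : ℝ)) ω * s k ω
          ≤ h + 1 := by
        filter_upwards [hbdd'] with ω hω
        have hle := sum_ind_le h hh (fun k => s k ω) hω N
        refine le_trans (le_of_eq ?_) hle
        refine Finset.sum_congr rfl fun k _ => ?_
        by_cases hc : ∀ j, 1 ≤ j → j ≤ k → ∑ i ∈ Finset.range j, s i ω < h
        · rw [if_pos hc, Set.indicator_of_mem (show ω ∈ A k from hc), one_mul]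
        · rw [if_neg hc, Set.indicator_of_notMem (show ω ∉ A k from hc), zero_mul]
      have h3 : ∫ ω, ∑ k ∈ Finset.range N, (A k).indicator (fun _ => (1 : ℝ)) ω * s k ω ∂μ
          ≤ h + 1 := by
        have hmono := integral_mono_ae
          (integrable_finset_sum _ fun k (_ : k ∈ Finset.range N) => hint_prod k)
          (integrable_const (h + 1)) h2
        simpa using hmono
      linarith
    have hdiv : ∑ k ∈ Finset.range N, (μ (A k)).toReal ≤ (h + 1) / m := by
      rw [le_div_iff₀ hm]
      nlinarith
    calc ∑ k ∈ Finset.range N, μ (A k)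
        = ∑ k ∈ Finset.range N, ENNReal.ofReal ((μ (A k)).toReal) :=
          Finset.sum_congr rfl fun k _ => (ENNReal.ofReal_toReal (measure_ne_top μ _)).symm
      _ = ENNReal.ofReal (∑ k ∈ Finset.range N, (μ (A k)).toReal) :=
          (ENNReal.ofReal_sum_of_nonneg fun k _ => ENNReal.toReal_nonneg).symm
      _ ≤ _ := ENNReal.ofReal_le_ofReal hdiv
  -- chain everything
  calc ∫⁻ ω, oneSidedAlarm h (fun k => s k ω) ∂μ
      ≤ ∫⁻ ω, ∑' k : ℕ, (A k).indicator (fun _ => (1 : ℝ≥0∞)) ω ∂μ := by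
        refine lintegral_mono fun ω => ?_
        refine (alarm_le_tsum h (fun k => s k ω)).trans (le_of_eq ?_)
        refine tsum_congr fun k => ?_
        by_cases hc : ∀ j, 1 ≤ j → j ≤ k → ∑ i ∈ Finset.range j, s i ω < h
        · rw [if_pos hc, Set.indicator_of_mem (show ω ∈ A k from hc)]
        · rw [if_neg hc, Set.indicator_of_notMem (show ω ∉ A k from hc)]
    _ = ∑' k : ℕ, μ (A k) := by
        rw [lintegral_tsum fun k =>
          ((measurable_const (a := (1:ℝ≥0∞))).indicator (hA_meas k)).aemeasurable]
        exact tsum_congr fun k => lintegral_indicator_one (hA_meas k)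
    _ ≤ ENNReal.ofReal ((h + 1) / m) := by
        rw [ENNReal.tsum_eq_iSup_nat]
        exact iSup_le hwald
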